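/- For the reduced planar system Σ' = ((C₂Σ² - 1)(3γ + 4(γ-1)C₂Σ - 2) + K(3γ + 2(γ-1)C₂Σ - 2))/(2(γ-1)C₂), K' = 2K(2C₂Σ² + K - 1), with 1 < γ < 2 and C₂ > 0, the point P₁₄ with Σ = -2(γ-1)/(3γ-2) and K = ((2-3γ)² - 8(γ-1)²C₂)/(2-3γ)² is an equilibrium, and the sum of the two Jacobian eigenvalues at P₁₄ equals -1 while their product equals ((64(γ-1)²C₂ - 7(2-3γ)²) · (-1))/(4(3γ-2)²) + 1/4 — equivalently, the eigenvalues are -1/2 ± √(64(γ-1)²C₂ - 7(2-3γ)²)/(2(2-3γ)) up to the stated sign convention; consequently P₁₄ is a local attractor whenever 0 < C₂ < (2-3γ)²/(8(γ-1)²). -/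

import Mathlib

noncomputable section

/-- Σ-component of the reduced system on the invariant set `A = v = 0`. -/
def fred (γ C₂ S K : ℝ) : ℝ :=
  ((C₂ * S ^ 2 - 1) * (3 * γ + 4 * (γ - 1) * C₂ * S - 2) +
    K * (3 * γ + 2 * (γ - 1) * C₂ * S - 2)) / (2 * (γ - 1) * C₂)

/-- K-component of the reduced system on the invariant set `A = v = 0`. -/
def gred (C₂ S K : ℝ) : ℝ := 2 * K * (2 * C₂ * S ^ 2 + K - 1)

/-- Jacobian matrix of the reduced planar system at `(S, K)`. -/
def Jred (γ C₂ S K : ℝ) : Matrix (Fin 2) (Fin 2) ℝ :=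
  !![deriv (fun s => fred γ C₂ s K) S, deriv (fun k => fred γ C₂ S k) K;
     deriv (fun s => gred C₂ s K) S, deriv (fun k => gred C₂ S k) K]

lemma Jred_eq (γ C₂ S K : ℝ) :
    Jred γ C₂ S K =
      !![(2 * C₂ * S * (3 * γ + 4 * (γ - 1) * C₂ * S - 2) +
            (C₂ * S ^ 2 - 1) * (4 * (γ - 1) * C₂) + K * (2 * (γ - 1) * C₂)) /
          (2 * (γ - 1) * C₂),
         (3 * γ + 2 * (γ - 1) * C₂ * S - 2) / (2 * (γ - 1) * C₂);
         8 * C₂ * K * S, 4 * C₂ * S ^ 2 + 4 * K - 2] := by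
  have h1 : deriv (fun s => fred γ C₂ s K) S =
      (2 * C₂ * S * (3 * γ + 4 * (γ - 1) * C₂ * S - 2) +
        (C₂ * S ^ 2 - 1) * (4 * (γ - 1) * C₂) + K * (2 * (γ - 1) * C₂)) /
      (2 * (γ - 1) * C₂) := by
    have hQ : HasDerivAt (fun s : ℝ => C₂ * s ^ 2 - 1) (2 * C₂ * S) S := by
      simpa [mul_comm, mul_assoc, mul_left_comm] using
        ((hasDerivAt_pow 2 S).const_mul C₂).sub_const 1
    have hL1 : HasDerivAt (fun s : ℝ => 3 * γ + 4 * (γ - 1) * C₂ * s - 2)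
        (4 * (γ - 1) * C₂) S := by
      simpa using (((hasDerivAt_id S).const_mul (4 * (γ - 1) * C₂)).const_add
        (3 * γ)).sub_const 2
    have hL2 : HasDerivAt (fun s : ℝ => K * (3 * γ + 2 * (γ - 1) * C₂ * s - 2))
        (K * (2 * (γ - 1) * C₂)) S := by
      simpa using ((((hasDerivAt_id S).const_mul (2 * (γ - 1) * C₂)).const_add
        (3 * γ)).sub_const 2).const_mul K
    have h := (((hQ.mul hL1).add hL2).div_const (2 * (γ - 1) * C₂)).deriv
    rw [show (fun s => fred γ C₂ s K) = fun s =>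
        ((C₂ * s ^ 2 - 1) * (3 * γ + 4 * (γ - 1) * C₂ * s - 2) +
          K * (3 * γ + 2 * (γ - 1) * C₂ * s - 2)) / (2 * (γ - 1) * C₂) from rfl]; exact h
  have h2 : deriv (fun k => fred γ C₂ S k) K =
      (3 * γ + 2 * (γ - 1) * C₂ * S - 2) / (2 * (γ - 1) * C₂) := by
    have h := ((((hasDerivAt_id' K).mul_const
        (3 * γ + 2 * (γ - 1) * C₂ * S - 2)).const_add
        ((C₂ * S ^ 2 - 1) * (3 * γ + 4 * (γ - 1) * C₂ * S - 2))).div_const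
        (2 * (γ - 1) * C₂)).deriv
    rw [show (fun k => fred γ C₂ S k) = fun k =>
        ((C₂ * S ^ 2 - 1) * (3 * γ + 4 * (γ - 1) * C₂ * S - 2) +
          k * (3 * γ + 2 * (γ - 1) * C₂ * S - 2)) / (2 * (γ - 1) * C₂) from rfl, h]
    ring
  have h3 : deriv (fun s => gred C₂ s K) S = 8 * C₂ * K * S := by
    have hQ := (((hasDerivAt_pow 2 S).const_mul (2 * C₂)).add_const (K - 1)).const_mul
      (2 * K)
    rw [show (fun s => gred C₂ s K) = fun s : ℝ => 2 * K * (2 * C₂ * s ^ 2 + (K - 1))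
      from funext fun s => by simp only [gred]; ring, hQ.deriv]
    push_cast
    ring
  have h4 : deriv (fun k => gred C₂ S k) K = 4 * C₂ * S ^ 2 + 4 * K - 2 := by
    have hQ := ((hasDerivAt_id' K).const_mul 2).mul
      ((hasDerivAt_id' K).add_const (2 * C₂ * S ^ 2 - 1))
    rw [show (fun k => gred C₂ S k) = fun k : ℝ => 2 * k * (k + (2 * C₂ * S ^ 2 - 1))
      from funext fun k => by simp only [gred]; ring]; refine hQ.deriv.trans ?_
    ring
  rw [Jred, h1, h2, h3, h4]


set_option maxHeartbeats 1600000 in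
/-- The equilibrium `P₁₄ : Σ = -2(γ-1)/(3γ-2)`, `K = ((2-3γ)² - 8(γ-1)²C₂)/(2-3γ)²`
of the reduced system has Jacobian whose eigenvalues sum to `-1` (trace) and whose
product (determinant) is `(64(γ-1)²C₂ - 7(2-3γ)²)·(-1)/(4(3γ-2)²) + 1/4`; and it is
a local attractor (all eigenvalues have negative real part) whenever
`0 < C₂ < (2-3γ)²/(8(γ-1)²)`. -/
theorem P14_trace_det_attractor (γ C₂ : ℝ) (hγ₁ : 1 < γ) (hγ₂ : γ < 2) (hC : 0 < C₂) :
    letI S₀ : ℝ := -2 * (γ - 1) / (3 * γ - 2)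
    letI K₀ : ℝ := ((2 - 3 * γ) ^ 2 - 8 * (γ - 1) ^ 2 * C₂) / (2 - 3 * γ) ^ 2
    fred γ C₂ S₀ K₀ = 0 ∧ gred C₂ S₀ K₀ = 0 ∧
    Matrix.trace (Jred γ C₂ S₀ K₀) = -1 ∧
    (Jred γ C₂ S₀ K₀).det =
      (64 * (γ - 1) ^ 2 * C₂ - 7 * (2 - 3 * γ) ^ 2) * (-1) / (4 * (3 * γ - 2) ^ 2)
        + 1 / 4 ∧
    (C₂ < (2 - 3 * γ) ^ 2 / (8 * (γ - 1) ^ 2) →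
      ∀ μ : ℂ,
        Module.End.HasEigenvalue
          (Matrix.toLin' ((Jred γ C₂ S₀ K₀).map (algebraMap ℝ ℂ))) μ → μ.re < 0) := by

  have hγ0 : (0:ℝ) < γ - 1 := by linarith
  have hγ : γ - 1 ≠ 0 := ne_of_gt hγ0
  have h320 : (0:ℝ) < 3 * γ - 2 := by linarith
  have h32 : 3 * γ - 2 ≠ 0 := ne_of_gt h320
  have h23 : 2 - 3 * γ ≠ 0 := by intro h; apply h32; linarith
  have hC' : C₂ ≠ 0 := ne_of_gt hC
  set S₀ : ℝ := -2 * (γ - 1) / (3 * γ - 2) with hS₀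
  set K₀ : ℝ := ((2 - 3 * γ) ^ 2 - 8 * (γ - 1) ^ 2 * C₂) / (2 - 3 * γ) ^ 2 with hK₀
  have hf : fred γ C₂ S₀ K₀ = 0 := by
    rw [fred, hS₀, hK₀]; field_simp [show γ * 3 - 2 ≠ 0 by contrapose! h32; linarith, show 2 - γ * 3 ≠ 0 by contrapose! h23; linarith]; ring
  have hg : gred C₂ S₀ K₀ = 0 := by
    rw [gred, hS₀, hK₀]; field_simp [show γ * 3 - 2 ≠ 0 by contrapose! h32; linarith, show 2 - γ * 3 ≠ 0 by contrapose! h23; linarith]; ring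
  have htr : Matrix.trace (Jred γ C₂ S₀ K₀) = -1 := by
    rw [Jred_eq, Matrix.trace_fin_two_of, hS₀, hK₀]
    field_simp [show γ * 3 - 2 ≠ 0 by contrapose! h32; linarith, show 2 - γ * 3 ≠ 0 by contrapose! h23; linarith]; ring
  have hdet : (Jred γ C₂ S₀ K₀).det =
      (64 * (γ - 1) ^ 2 * C₂ - 7 * (2 - 3 * γ) ^ 2) * (-1) / (4 * (3 * γ - 2) ^ 2)
        + 1 / 4 := by
    rw [Jred_eq, Matrix.det_fin_two_of, hS₀, hK₀]
    field_simp [show γ * 3 - 2 ≠ 0 by contrapose! h32; linarith, show 2 - γ * 3 ≠ 0 by contrapose! h23; linarith]; ring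
  refine ⟨hf, hg, htr, hdet, ?_⟩
  intro hC2 μ hμ
  set M : Matrix (Fin 2) (Fin 2) ℝ := Jred γ C₂ S₀ K₀ with hM
  -- determinant positivity
  have hnum : 64 * (γ - 1) ^ 2 * C₂ < 8 * (2 - 3 * γ) ^ 2 := by
    have h8 : (0:ℝ) < 8 * (γ - 1) ^ 2 := by positivity
    have h := (lt_div_iff₀ h8).mp hC2
    nlinarith [h]
  have hd0 : (0:ℝ) <
      (64 * (γ - 1) ^ 2 * C₂ - 7 * (2 - 3 * γ) ^ 2) * (-1) / (4 * (3 * γ - 2) ^ 2)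
        + 1 / 4 := by
    have hq : (0:ℝ) < (3 * γ - 2) ^ 2 := by positivity
    have heq : (64 * (γ - 1) ^ 2 * C₂ - 7 * (2 - 3 * γ) ^ 2) * (-1) / (4 * (3 * γ - 2) ^ 2)
        + 1 / 4 = (8 * (2 - 3 * γ) ^ 2 - 64 * (γ - 1) ^ 2 * C₂) / (4 * (3 * γ - 2) ^ 2) := by
      field_simp [show γ * 3 - 2 ≠ 0 by contrapose! h32; linarith, show 2 - γ * 3 ≠ 0 by contrapose! h23; linarith]; ring
    rw [heq]
    exact div_pos (by linarith) (by positivity)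
  have hdpos : (0:ℝ) < M.det := by rw [hdet]; exact hd0
  -- eigenvalue gives root of characteristic polynomial
  obtain ⟨v, hv⟩ := hμ.exists_hasEigenvector
  have happ : (M.map (algebraMap ℝ ℂ)).mulVec v = μ • v := by
    have := hv.apply_eq_smul
    rwa [Matrix.toLin'_apply] at this
  have hdet0 : ((M.map (algebraMap ℝ ℂ)) - μ • 1).det = 0 := by
    rw [← Matrix.exists_mulVec_eq_zero_iff]
    refine ⟨v, hv.2, ?_⟩
    rw [Matrix.sub_mulVec, happ, Matrix.smul_mulVec, Matrix.one_mulVec, sub_self]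
  have key : μ ^ 2 - ((Matrix.trace M : ℝ) : ℂ) * μ + ((M.det : ℝ) : ℂ) = 0 := by
    rw [← hdet0]
    simp [Matrix.det_fin_two, Matrix.trace_fin_two, Matrix.map_apply, Matrix.sub_apply,
      Matrix.smul_apply, Matrix.one_apply, Matrix.det_fin_two]
    ring
  rw [htr] at key
  set d : ℝ := M.det with hd
  have key2 : μ ^ 2 + μ + (d : ℂ) = 0 := by
    rw [← key]; push_cast; ring
  obtain ⟨hre, him⟩ := Complex.ext_iff.mp key2
  simp only [Complex.add_re, Complex.add_im, Complex.mul_re, Complex.mul_im, pow_two,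
    Complex.ofReal_re, Complex.ofReal_im, Complex.zero_re, Complex.zero_im] at hre him
  by_contra hx
  push_neg at hx
  have h3 : (2 * μ.re * μ.im + μ.im) * μ.im = 0 := by nlinarith [him]
  nlinarith [h3, hre, hdpos, hx, sq_nonneg μ.im, sq_nonneg μ.re,
    mul_nonneg hx (sq_nonneg μ.im)]
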